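/- arXiv:0905.2900 — 3 statements merged into one kernel-verified Lean document; each statement's English description precedes it below -/
import Mathlib

section
/- Let dm be a finite nonnegative Borel measure on [0,ℓ]. For j ≥ 1, define ψ_j(ℓ) = ∫ dm(s_1)...∫ dm(s_j) 𝟙(0 < s_j < s_{j-1} < ... < s_1 < ℓ) (ℓ-s_1)(s_1-s_2)···(s_{j-1}-s_j)s_j. Then ψ_j(ℓ) ≤ (ℓ/j!)·(∫_{(0,ℓ)} (ℓ-s) dm(s))^j. -/
open MeasureTheory

private lemma perm_unique_aux {n : ℕ} {s : Fin n → ℝ} {σ τ : Equiv.Perm (Fin n)}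
    (hσ : StrictAnti (s ∘ σ)) (hτ : StrictAnti (s ∘ τ)) : σ = τ := by
  have hsinj : Function.Injective s := by
    intro a b hab
    have h1 : (s ∘ σ) (σ.symm a) = (s ∘ σ) (σ.symm b) := by simp [hab]
    have := hσ.injective h1
    simpa using congrArg σ this
  have hcard : (Finset.image s Finset.univ).card = n := by
    rw [Finset.card_image_of_injective _ hsinj, Finset.card_univ, Fintype.card_fin]
  have hrev : StrictAnti (Fin.rev : Fin n → Fin n) := fun a b h => Fin.rev_lt_rev.mpr h
  have e1 := Finset.orderEmbOfFin_unique hcard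
    (f := (s ∘ σ) ∘ Fin.rev) (fun x => Finset.mem_image_of_mem s (Finset.mem_univ _)) (hσ.comp hrev)
  have e2 := Finset.orderEmbOfFin_unique hcard
    (f := (s ∘ τ) ∘ Fin.rev) (fun x => Finset.mem_image_of_mem s (Finset.mem_univ _)) (hτ.comp hrev)
  have e3 : (s ∘ σ) ∘ Fin.rev = (s ∘ τ) ∘ Fin.rev := e1.trans e2.symm
  ext i
  have := congrFun e3 i.rev
  simp only [Function.comp_apply, Fin.rev_rev] at this
  exact congrArg Fin.val (hsinj this)

/-- bound on the ordered iterated integral ψ_j(ℓ) (here j = k+1 ≥ 1):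
ψ_j(ℓ) ≤ (ℓ/j!)·(∫_{(0,ℓ)} (ℓ-s) dm(s))^j. -/
theorem stmt_5 (ℓ : ℝ) (hℓ : 0 < ℓ) (μ : Measure ℝ) [IsFiniteMeasure μ]
    (hsupp : μ (Set.Icc (0 : ℝ) ℓ)ᶜ = 0) (k : ℕ) :
    (∫ s : Fin (k + 1) → ℝ,
        Set.indicator
          {s : Fin (k + 1) → ℝ | StrictAnti s ∧ 0 < s (Fin.last k) ∧ s 0 < ℓ}
          (fun s => (ℓ - s 0) * (∏ i : Fin k, (s i.castSucc - s i.succ)) * s (Fin.last k)) s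
        ∂(Measure.pi fun _ : Fin (k + 1) => μ))
      ≤ ℓ / (Nat.factorial (k + 1)) * (∫ s in Set.Ioo (0 : ℝ) ℓ, (ℓ - s) ∂μ) ^ (k + 1) := by
  classical
  set π : Measure (Fin (k + 1) → ℝ) := Measure.pi fun _ => μ with hπdef
  set h : ℝ → ℝ := Set.indicator (Set.Ioo 0 ℓ) (fun t => ℓ - t) with hhdef
  set G : (Fin (k + 1) → ℝ) → ℝ := fun s => ∏ i, h (s i) with hGdef
  set A : Set (Fin (k + 1) → ℝ) :=
    {s | StrictAnti s ∧ 0 < s (Fin.last k) ∧ s 0 < ℓ} with hAdef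
  set D : Set (Fin (k + 1) → ℝ) := {s | StrictAnti s} with hDdef
  set f : (Fin (k + 1) → ℝ) → ℝ :=
    fun s => (ℓ - s 0) * (∏ i : Fin k, (s i.castSucc - s i.succ)) * s (Fin.last k) with hfdef
  -- basic facts about h and G
  have hnn : ∀ t, 0 ≤ h t := by
    intro t
    refine Set.indicator_nonneg (fun x hx => ?_) t
    exact sub_nonneg.mpr hx.2.le
  have hhb : ∀ t, h t ≤ ℓ := by
    intro t
    by_cases ht : t ∈ Set.Ioo (0 : ℝ) ℓ
    · rw [hhdef, Set.indicator_of_mem ht]; linarith [ht.1]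
    · rw [hhdef, Set.indicator_of_notMem ht]; exact hℓ.le
  have hGnn : ∀ s, 0 ≤ G s := fun s => Finset.prod_nonneg fun i _ => hnn _
  have hGb : ∀ s, G s ≤ ℓ ^ (k + 1) := by
    intro s
    calc G s ≤ ∏ _i : Fin (k + 1), ℓ :=
          Finset.prod_le_prod (fun i _ => hnn _) (fun i _ => hhb _)
      _ = ℓ ^ (k + 1) := by
          rw [Finset.prod_const, Finset.card_univ, Fintype.card_fin]
  have hhmeas : Measurable h :=
    (measurable_const.sub measurable_id).indicator measurableSet_Ioo
  have hGmeas : Measurable G :=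
    Finset.measurable_prod _ fun i _ => hhmeas.comp (measurable_pi_apply i)
  -- measurability of the "sorted by σ" sets
  have hDσmeas : ∀ σ : Equiv.Perm (Fin (k + 1)),
      MeasurableSet {s : Fin (k + 1) → ℝ | StrictAnti (s ∘ σ)} := by
    intro σ
    have heq : {s : Fin (k + 1) → ℝ | StrictAnti (s ∘ σ)} =
        ⋂ (i) (j) (_ : i < j), {s : Fin (k + 1) → ℝ | s (σ j) < s (σ i)} := by
      ext s
      simp only [Set.mem_setOf_eq, Set.mem_iInter]
      exact ⟨fun hs i j hij => hs hij, fun hs a b hab => hs a b hab⟩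
    rw [heq]
    exact MeasurableSet.iInter fun i => MeasurableSet.iInter fun j =>
      MeasurableSet.iInter fun _ =>
        measurableSet_lt (measurable_pi_apply _) (measurable_pi_apply _)
  have hDmeas : MeasurableSet D := by
    have heq : D = ⋂ (i) (j) (_ : i < j), {s : Fin (k + 1) → ℝ | s j < s i} := by
      ext s
      simp only [hDdef, Set.mem_setOf_eq, Set.mem_iInter]
      exact ⟨fun hs i j hij => hs hij, fun hs a b hab => hs a b hab⟩
    rw [heq]
    exact MeasurableSet.iInter fun i => MeasurableSet.iInter fun j =>
      MeasurableSet.iInter fun _ =>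
        measurableSet_lt (measurable_pi_apply _) (measurable_pi_apply _)
  -- integrability
  have hintind : ∀ (S : Set (Fin (k + 1) → ℝ)), MeasurableSet S →
      Integrable (Set.indicator S G) π := by
    intro S hS
    refine Integrable.mono' (integrable_const (ℓ ^ (k + 1)))
      ((hGmeas.indicator hS).aestronglyMeasurable) (Filter.Eventually.of_forall fun s => ?_)
    rw [Real.norm_eq_abs]
    by_cases hs : s ∈ S
    · rw [Set.indicator_of_mem hs, abs_of_nonneg (hGnn s)]; exact hGb s
    · rw [Set.indicator_of_notMem hs]; simp [pow_nonneg hℓ.le]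
  have hintG : Integrable G π := by
    refine Integrable.mono' (integrable_const (ℓ ^ (k + 1)))
      hGmeas.aestronglyMeasurable (Filter.Eventually.of_forall fun s => ?_)
    rw [Real.norm_eq_abs, abs_of_nonneg (hGnn s)]; exact hGb s
  -- Step 1 : pointwise bound
  have step1 : ∀ s, Set.indicator A f s ≤ ℓ * Set.indicator D G s := by
    intro s
    by_cases hs : s ∈ A
    · obtain ⟨hanti, hpos, hlt⟩ := hs
      have hmem : ∀ i, s i ∈ Set.Ioo (0 : ℝ) ℓ := fun i =>
        ⟨lt_of_lt_of_le hpos (hanti.antitone (Fin.le_last i)),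
         lt_of_le_of_lt (hanti.antitone (Fin.zero_le i)) hlt⟩
      have hsD : s ∈ D := hanti
      rw [Set.indicator_of_mem (by exact ⟨hanti, hpos, hlt⟩), Set.indicator_of_mem hsD]
      have hGval : G s = ∏ i, (ℓ - s i) := by
        rw [hGdef]
        exact Finset.prod_congr rfl fun i _ => by
          rw [hhdef, Set.indicator_of_mem (hmem i)]
      rw [hGval]
      have hp1 : ∏ i : Fin k, (s i.castSucc - s i.succ) ≤ ∏ i : Fin k, (ℓ - s i.succ) :=
        Finset.prod_le_prod
          (fun i _ => sub_nonneg.mpr (hanti (Fin.castSucc_lt_succ (i := i))).le)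
          (fun i _ => sub_le_sub_right (hmem i.castSucc).2.le _)
      have hq : (0:ℝ) ≤ ∏ i : Fin k, (ℓ - s i.succ) :=
        Finset.prod_nonneg fun i _ => sub_nonneg.mpr (hmem i.succ).2.le
      have h0 : (0:ℝ) ≤ ℓ - s 0 := sub_nonneg.mpr (hmem 0).2.le
      have hlast1 : (0:ℝ) ≤ s (Fin.last k) := (hmem _).1.le
      have hlast2 : s (Fin.last k) ≤ ℓ := (hmem _).2.le
      calc f s ≤ (ℓ - s 0) * (∏ i : Fin k, (ℓ - s i.succ)) * ℓ := by
            exact mul_le_mul (mul_le_mul_of_nonneg_left hp1 h0) hlast2 hlast1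
              (mul_nonneg h0 hq)
        _ = ℓ * ∏ i : Fin (k + 1), (ℓ - s i) := by
            rw [Fin.prod_univ_succ]; ring
    · rw [Set.indicator_of_notMem hs]
      exact mul_nonneg hℓ.le (Set.indicator_nonneg (fun x _ => hGnn x) s)
  -- Step 2 : integral comparison
  have step2 : (∫ s, Set.indicator A f s ∂π) ≤ ℓ * ∫ s, Set.indicator D G s ∂π := by
    have hLnn : ∀ s, 0 ≤ Set.indicator A f s := by
      intro s
      refine Set.indicator_nonneg (fun x hx => ?_) s
      obtain ⟨hanti, hpos, hlt⟩ := hx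
      have hmem : ∀ i, x i ∈ Set.Ioo (0 : ℝ) ℓ := fun i =>
        ⟨lt_of_lt_of_le hpos (hanti.antitone (Fin.le_last i)),
         lt_of_le_of_lt (hanti.antitone (Fin.zero_le i)) hlt⟩
      refine mul_nonneg (mul_nonneg (sub_nonneg.mpr (hmem 0).2.le)
        (Finset.prod_nonneg fun i _ =>
          sub_nonneg.mpr (hanti (Fin.castSucc_lt_succ (i := i))).le)) (hmem _).1.le
    have := integral_mono_of_nonneg (μ := π)
      (f := fun s => Set.indicator A f s) (g := fun s => ℓ * Set.indicator D G s)
      (Filter.Eventually.of_forall hLnn) ((hintind D hDmeas).const_mul ℓ)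
      (Filter.Eventually.of_forall step1)
    rwa [integral_const_mul] at this
  -- Step 3 : permutation invariance
  have step3 : ∀ σ : Equiv.Perm (Fin (k + 1)),
      (∫ s, Set.indicator {x : Fin (k + 1) → ℝ | StrictAnti (x ∘ σ)} G s ∂π)
        = ∫ s, Set.indicator D G s ∂π := by
    intro σ
    have hmp := measurePreserving_piCongrLeft (fun _ : Fin (k + 1) => μ) σ.symm
    have hco : ∀ s : Fin (k + 1) → ℝ,
        (MeasurableEquiv.piCongrLeft (fun _ => ℝ) σ.symm) s = s ∘ σ := by
      intro s; funext b
      have := Equiv.piCongrLeft_apply_apply (fun _ => ℝ) σ.symm s (σ b)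
      simpa [MeasurableEquiv.coe_piCongrLeft] using this
    have hint := hmp.integral_comp'
      (f := MeasurableEquiv.piCongrLeft (fun _ => ℝ) σ.symm) (Set.indicator D G)
    simp_rw [hco] at hint
    have hptw : ∀ s : Fin (k + 1) → ℝ,
        Set.indicator D G (s ∘ σ) = Set.indicator {x : Fin (k + 1) → ℝ | StrictAnti (x ∘ σ)} G s := by
      intro s
      by_cases hs : StrictAnti (s ∘ σ)
      · have hm1 : s ∘ σ ∈ D := hs
        have hm2 : s ∈ {x : Fin (k + 1) → ℝ | StrictAnti (x ∘ ⇑σ)} := hs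
        rw [Set.indicator_of_mem hm1, Set.indicator_of_mem hm2]
        show ∏ i, h ((s ∘ σ) i) = ∏ i, h (s i)
        exact Equiv.prod_comp σ fun i => h (s i)
      · have hm1 : s ∘ σ ∉ D := hs
        have hm2 : s ∉ {x : Fin (k + 1) → ℝ | StrictAnti (x ∘ ⇑σ)} := hs
        rw [Set.indicator_of_notMem hm1, Set.indicator_of_notMem hm2]
    simp_rw [hπdef, ← hint, hptw]
  -- Step 4 : symmetrization
  have step4 : ((k + 1).factorial : ℝ) * (∫ s, Set.indicator D G s ∂π) ≤ ∫ s, G s ∂π := by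
    have hpt : ∀ s, (∑ σ : Equiv.Perm (Fin (k + 1)),
        Set.indicator {x : Fin (k + 1) → ℝ | StrictAnti (x ∘ σ)} G s) ≤ G s := by
      intro s
      by_cases hex : ∃ σ : Equiv.Perm (Fin (k + 1)), StrictAnti (s ∘ σ)
      · obtain ⟨σ₀, h₀⟩ := hex
        have hsum : (∑ σ : Equiv.Perm (Fin (k + 1)),
            Set.indicator {x : Fin (k + 1) → ℝ | StrictAnti (x ∘ σ)} G s)
            = Set.indicator {x : Fin (k + 1) → ℝ | StrictAnti (x ∘ σ₀)} G s := by
          refine Finset.sum_eq_single σ₀ (fun τ _ hτ => ?_) (fun hmem => absurd (Finset.mem_univ _) hmem)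
          have hnot : s ∉ {x : Fin (k + 1) → ℝ | StrictAnti (x ∘ ⇑τ)} :=
            fun hc => hτ (perm_unique_aux hc h₀)
          exact Set.indicator_of_notMem hnot _
        have hmem₀ : s ∈ {x : Fin (k + 1) → ℝ | StrictAnti (x ∘ ⇑σ₀)} := h₀
        rw [hsum, Set.indicator_of_mem hmem₀]
      · have : ∀ σ : Equiv.Perm (Fin (k + 1)),
            Set.indicator {x : Fin (k + 1) → ℝ | StrictAnti (x ∘ σ)} G s = 0 := by
          intro σ
          have hnot : s ∉ {x : Fin (k + 1) → ℝ | StrictAnti (x ∘ ⇑σ)} := fun hc => hex ⟨σ, hc⟩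
          exact Set.indicator_of_notMem hnot _
        rw [Finset.sum_congr rfl fun σ _ => this σ]
        simpa using hGnn s
    have hsum_int : (∑ σ : Equiv.Perm (Fin (k + 1)),
        ∫ s, Set.indicator {x : Fin (k + 1) → ℝ | StrictAnti (x ∘ σ)} G s ∂π) ≤ ∫ s, G s ∂π := by
      rw [← integral_finset_sum _ (fun σ _ => hintind _ (hDσmeas σ))]
      exact integral_mono_of_nonneg
        (Filter.Eventually.of_forall fun s => Finset.sum_nonneg fun σ _ =>
          Set.indicator_nonneg (fun x _ => hGnn x) s)
        hintG (Filter.Eventually.of_forall hpt)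
    calc ((k + 1).factorial : ℝ) * (∫ s, Set.indicator D G s ∂π)
        = ∑ σ : Equiv.Perm (Fin (k + 1)),
            ∫ s, Set.indicator {x : Fin (k + 1) → ℝ | StrictAnti (x ∘ σ)} G s ∂π := by
          rw [Finset.sum_congr rfl fun σ _ => step3 σ, Finset.sum_const, Finset.card_univ,
            Fintype.card_perm, Fintype.card_fin, nsmul_eq_mul]
      _ ≤ ∫ s, G s ∂π := hsum_int
  -- Step 5 : product formula
  have step5 : (∫ s, G s ∂π) = (∫ s in Set.Ioo (0 : ℝ) ℓ, (ℓ - s) ∂μ) ^ (k + 1) := by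
    have hI : (∫ t, h t ∂μ) = ∫ s in Set.Ioo (0 : ℝ) ℓ, (ℓ - s) ∂μ := by
      rw [hhdef, integral_indicator measurableSet_Ioo]
    rw [← hI]
    letI : MeasureSpace ℝ := ⟨μ⟩
    have := MeasureTheory.integral_fintype_prod_eq_pow (ι := Fin (k + 1)) h (μ := μ)
    simpa using this
  -- conclusion
  have hDint_nn : 0 ≤ ∫ s, Set.indicator D G s ∂π :=
    integral_nonneg fun s => Set.indicator_nonneg (fun x _ => hGnn x) s
  have hfac : (0:ℝ) < ((k + 1).factorial : ℝ) := by
    exact_mod_cast Nat.factorial_pos (k + 1)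
  have h4 : (∫ s, Set.indicator D G s ∂π)
      ≤ (∫ s in Set.Ioo (0 : ℝ) ℓ, (ℓ - s) ∂μ) ^ (k + 1) / ((k + 1).factorial : ℝ) := by
    rw [le_div_iff₀ hfac, mul_comm]
    rw [← step5]; exact step4
  calc (∫ s, Set.indicator A f s ∂π) ≤ ℓ * ∫ s, Set.indicator D G s ∂π := step2
    _ ≤ ℓ * ((∫ s in Set.Ioo (0 : ℝ) ℓ, (ℓ - s) ∂μ) ^ (k + 1) / ((k + 1).factorial : ℝ)) :=
        mul_le_mul_of_nonneg_left h4 hℓ.le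
    _ = ℓ / (Nat.factorial (k + 1)) * (∫ s in Set.Ioo (0 : ℝ) ℓ, (ℓ - s) ∂μ) ^ (k + 1) := by
        ring
end

section
/- Let m: ℝ → [0,∞) be a nondecreasing càdlàg function with m = 0 on (-∞,0), support of dm having infimum 0 and supremum ℓ < ∞. A continuous function F on [0,ℓ] with F(0)=F(ℓ)=0 satisfies the eigenvalue equation F(x) = b·x - λ∫_0^x dy ∫_{[0,y)} F(z) dm(z) for some constant b if and only if F(x) = λ∫_{[0,ℓ)} G_{0,ℓ}(x,y)F(y) dm(y) for all x ∈ [0,ℓ], where G_{0,ℓ}(x,y) = y(ℓ-x)/ℓ for y ≤ x and x(ℓ-y)/ℓ for x ≤ y. -/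
open MeasureTheory

private lemma integrable_aux (μ : Measure ℝ) [IsFiniteMeasure μ] {s : Set ℝ}
    {a b : ℝ} (hsub : s ⊆ Set.Icc a b) {h : ℝ → ℝ} (hh : Continuous h) :
    IntegrableOn h s μ :=
  (hh.continuousOn.integrableOn_compact (isCompact_Icc (a := a) (b := b))).mono_set hsub

private lemma fubini_aux (μ : Measure ℝ) [IsFiniteMeasure μ] (G : ℝ → ℝ) (hG : Continuous G)
    (x : ℝ) (hx : 0 ≤ x) :
    (∫ y in (0:ℝ)..x, (∫ z in Set.Ico (0:ℝ) y, G z ∂μ)) =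
      ∫ z in Set.Ico (0:ℝ) x, (x - z) * G z ∂μ := by
  classical
  obtain ⟨C, hC0, hC⟩ : ∃ C, 0 ≤ C ∧ ∀ z ∈ Set.Icc (0:ℝ) x, ‖G z‖ ≤ C := by
    obtain ⟨C, hC⟩ :=
      (isCompact_Icc (a := (0:ℝ)) (b := x)).exists_bound_of_continuousOn hG.continuousOn
    exact ⟨max C 0, le_max_right _ _, fun z hz => (hC z hz).trans (le_max_left _ _)⟩
  set f : ℝ → ℝ → ℝ := fun y z => if 0 ≤ z ∧ z < y ∧ y ≤ x then G z else 0 with hfdef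
  haveI : IsFiniteMeasure (volume.restrict (Set.Ioc (0:ℝ) x)) := by
    constructor
    rw [Measure.restrict_apply_univ, Real.volume_Ioc]
    exact ENNReal.ofReal_lt_top
  have hfmeas : StronglyMeasurable (Function.uncurry f) := by
    apply StronglyMeasurable.ite
    · exact MeasurableSet.inter (measurableSet_le measurable_const measurable_snd)
        (MeasurableSet.inter (measurableSet_lt measurable_snd measurable_fst)
          (measurableSet_le measurable_fst measurable_const))
    · exact (hG.comp continuous_snd).stronglyMeasurable
    · exact stronglyMeasurable_const
  have hfint : Integrable (Function.uncurry f) ((volume.restrict (Set.Ioc (0:ℝ) x)).prod μ) := by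
    refine ⟨hfmeas.aestronglyMeasurable, ?_⟩
    apply HasFiniteIntegral.of_bounded (C := C)
    refine ae_of_all _ fun p => ?_
    by_cases hp : 0 ≤ p.2 ∧ p.2 < p.1 ∧ p.1 ≤ x
    · simp only [Function.uncurry, f, if_pos hp]
      exact hC _ ⟨hp.1, hp.2.1.le.trans hp.2.2⟩
    · simp only [Function.uncurry, f, if_neg hp]
      simpa using hC0
  rw [intervalIntegral.integral_of_le hx]
  have h1 : Set.EqOn (fun y => ∫ z in Set.Ico (0:ℝ) y, G z ∂μ) (fun y => ∫ z, f y z ∂μ)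
      (Set.Ioc (0:ℝ) x) := by
    intro y hy
    show (∫ z in Set.Ico (0:ℝ) y, G z ∂μ) = ∫ z, f y z ∂μ
    rw [← integral_indicator measurableSet_Ico]
    congr 1 with z
    by_cases hz : z ∈ Set.Ico (0:ℝ) y
    · rw [Set.indicator_of_mem hz]
      simp only [f]
      rw [if_pos ⟨hz.1, hz.2, hy.2⟩]
    · rw [Set.indicator_of_notMem hz]
      simp only [f]
      rw [if_neg (fun h => hz ⟨h.1, h.2.1⟩)]
  rw [setIntegral_congr_fun measurableSet_Ioc h1]
  rw [integral_integral_swap hfint]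
  have h2 : ∀ z, (∫ y in Set.Ioc (0:ℝ) x, f y z) =
      (Set.Ico (0:ℝ) x).indicator (fun z => (x - z) * G z) z := by
    intro z
    by_cases hz : z ∈ Set.Ico (0:ℝ) x
    · rw [Set.indicator_of_mem hz]
      have heq : Set.EqOn (fun y => f y z) ((Set.Ioc z x).indicator (fun _ => G z))
          (Set.Ioc (0:ℝ) x) := by
        intro y hy
        show f y z = (Set.Ioc z x).indicator (fun _ => G z) y
        by_cases hzy : z < y
        · have hmem : y ∈ Set.Ioc z x := ⟨hzy, hy.2⟩
          simp only [f]
          rw [Set.indicator_of_mem hmem, if_pos ⟨hz.1, hzy, hy.2⟩]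
        · simp only [f]
          rw [Set.indicator_of_notMem (fun h => hzy h.1), if_neg (fun h => hzy h.2.1)]
      rw [setIntegral_congr_fun measurableSet_Ioc heq,
        setIntegral_indicator measurableSet_Ioc]
      have hint : Set.Ioc (0:ℝ) x ∩ Set.Ioc z x = Set.Ioc z x := by
        rw [Set.Ioc_inter_Ioc, max_eq_right hz.1, min_self]
      rw [hint, setIntegral_const, measureReal_def, Real.volume_Ioc,
        ENNReal.toReal_ofReal (sub_nonneg.2 hz.2.le), smul_eq_mul]
    · rw [Set.indicator_of_notMem hz]
      have heq : Set.EqOn (fun y => f y z) (fun _ => (0:ℝ)) (Set.Ioc (0:ℝ) x) := by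
        intro y hy
        show f y z = 0
        simp only [f]
        rw [if_neg]
        rintro ⟨h1', h2', h3'⟩
        exact hz ⟨h1', h2'.trans_le hy.2⟩
      rw [setIntegral_congr_fun measurableSet_Ioc heq, integral_const, smul_zero]
  rw [show (fun z => ∫ y in Set.Ioc (0:ℝ) x, f y z) =
      (Set.Ico (0:ℝ) x).indicator (fun z => (x - z) * G z) from funext h2]
  rw [integral_indicator measurableSet_Ico]

private lemma green_aux (μ : Measure ℝ) [IsFiniteMeasure μ] (G : ℝ → ℝ) (hG : Continuous G)
    (ℓ : ℝ) (hℓ : 0 < ℓ) (x : ℝ) (hx : x ∈ Set.Icc 0 ℓ) :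
    (∫ y in Set.Ico (0:ℝ) ℓ, (if y ≤ x then y * (ℓ - x) / ℓ else x * (ℓ - y) / ℓ) * G y ∂μ) =
      x / ℓ * (∫ y in Set.Ico (0:ℝ) ℓ, (ℓ - y) * G y ∂μ) -
        ∫ z in Set.Ico (0:ℝ) x, (x - z) * G z ∂μ := by
  have hne : ℓ ≠ 0 := hℓ.ne'
  have key : Set.EqOn (fun y => (if y ≤ x then y * (ℓ - x) / ℓ else x * (ℓ - y) / ℓ) * G y)
      (fun y => x / ℓ * ((ℓ - y) * G y) -
        (Set.Ico (0:ℝ) x).indicator (fun z => (x - z) * G z) y)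
      (Set.Ico (0:ℝ) ℓ) := by
    intro y hy
    by_cases h1 : y < x
    · have hmem : y ∈ Set.Ico (0:ℝ) x := ⟨hy.1, h1⟩
      simp only
      rw [Set.indicator_of_mem hmem, if_pos h1.le]
      field_simp
      ring
    · simp only
      rw [Set.indicator_of_notMem (fun h => h1 h.2)]
      by_cases h2 : y ≤ x
      · have hyx : y = x := le_antisymm h2 (not_lt.1 h1)
        subst hyx
        rw [if_pos le_rfl]
        field_simp
        ring
      · rw [if_neg h2]
        ring
  rw [setIntegral_congr_fun measurableSet_Ico key]
  have hi1 : Integrable (fun y => x / ℓ * ((ℓ - y) * G y)) (μ.restrict (Set.Ico 0 ℓ)) :=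
    integrable_aux μ Set.Ico_subset_Icc_self
      (continuous_const.mul ((continuous_const.sub continuous_id).mul hG))
  have hi2 : Integrable ((Set.Ico (0:ℝ) x).indicator (fun z => (x - z) * G z))
      (μ.restrict (Set.Ico 0 ℓ)) := by
    apply Integrable.restrict
    exact (integrable_aux μ Set.Ico_subset_Icc_self
      ((continuous_const.sub continuous_id).mul hG)).integrable_indicator measurableSet_Ico
  rw [integral_sub hi1 hi2, integral_const_mul, setIntegral_indicator measurableSet_Ico]
  have hint : Set.Ico (0:ℝ) ℓ ∩ Set.Ico (0:ℝ) x = Set.Ico (0:ℝ) x := by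
    rw [Set.Ico_inter_Ico, max_self, min_eq_right hx.2]
  rw [hint]

/-- for the generalized operator -D_m D_x with Dirichlet conditions, a continuous
F on [0,ℓ] with F(0)=F(ℓ)=0 satisfies F(x) = b·x - λ∫₀^x ∫_{[0,y)} F dm dy for some b iff it
satisfies the Green-function equation F(x) = λ∫_{[0,ℓ)} G_{0,ℓ}(x,y) F(y) dm(y). -/
theorem stmt_7 (m : StieltjesFunction ℝ) (hm0 : ∀ x < (0 : ℝ), m x = 0)
    (ℓ : ℝ) (hℓ : 0 < ℓ) [IsFiniteMeasure m.measure]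
    (hsupp_top : m.measure (Set.Ioi ℓ) = 0)
    (hinf : ∀ ε > (0 : ℝ), 0 < m.measure (Set.Ioo 0 ε))
    (hsup : ∀ ε > (0 : ℝ), 0 < m.measure (Set.Ioo (ℓ - ε) ℓ))
    (lam : ℝ) (F : ℝ → ℝ) (hF : ContinuousOn F (Set.Icc 0 ℓ))
    (hF0 : F 0 = 0) (hFl : F ℓ = 0) :
    (∃ b : ℝ, ∀ x ∈ Set.Icc (0 : ℝ) ℓ,
        F x = b * x - lam * ∫ y in (0 : ℝ)..x, (∫ z in Set.Ico (0 : ℝ) y, F z ∂m.measure)) ↔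
      (∀ x ∈ Set.Icc (0 : ℝ) ℓ,
        F x = lam * ∫ y in Set.Ico (0 : ℝ) ℓ,
          (if y ≤ x then y * (ℓ - x) / ℓ else x * (ℓ - y) / ℓ) * F y ∂m.measure) := by
  classical
  have hne : ℓ ≠ 0 := hℓ.ne'
  set μ := m.measure with hμ
  obtain ⟨G, hGc, hGF⟩ : ∃ G : ℝ → ℝ, Continuous G ∧ ∀ z ∈ Set.Icc (0:ℝ) ℓ, G z = F z := by
    refine ⟨Set.IccExtend hℓ.le ((Set.Icc (0:ℝ) ℓ).restrict F), ?_, ?_⟩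
    · exact hF.restrict.Icc_extend'
    · intro z hz
      rw [Set.IccExtend_of_mem hℓ.le _ hz]
      rfl
  have hiter : ∀ x ∈ Set.Icc (0:ℝ) ℓ,
      (∫ y in (0:ℝ)..x, (∫ z in Set.Ico (0:ℝ) y, F z ∂μ)) =
      ∫ z in Set.Ico (0:ℝ) x, (x - z) * G z ∂μ := by
    intro x hx
    rw [← fubini_aux μ G hGc x hx.1]
    apply intervalIntegral.integral_congr
    intro y hy
    rw [Set.uIcc_of_le hx.1] at hy
    exact setIntegral_congr_fun measurableSet_Ico fun z hz =>
      (hGF z ⟨hz.1, hz.2.le.trans (hy.2.trans hx.2)⟩).symm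
  have hgreen : ∀ x ∈ Set.Icc (0:ℝ) ℓ,
      (∫ y in Set.Ico (0:ℝ) ℓ, (if y ≤ x then y * (ℓ - x) / ℓ else x * (ℓ - y) / ℓ) * F y ∂μ) =
      x / ℓ * (∫ y in Set.Ico (0:ℝ) ℓ, (ℓ - y) * G y ∂μ) -
        ∫ z in Set.Ico (0:ℝ) x, (x - z) * G z ∂μ := by
    intro x hx
    rw [← green_aux μ G hGc ℓ hℓ x hx]
    exact setIntegral_congr_fun measurableSet_Ico fun y hy => by
      rw [hGF y ⟨hy.1, hy.2.le⟩]
  set I := ∫ y in Set.Ico (0:ℝ) ℓ, (ℓ - y) * G y ∂μ with hIdef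
  constructor
  · rintro ⟨b, hb⟩ x hx
    have hℓmem : ℓ ∈ Set.Icc (0:ℝ) ℓ := ⟨hℓ.le, le_refl ℓ⟩
    have h := hb ℓ hℓmem
    rw [hiter ℓ hℓmem, hFl] at h
    rw [show (∫ z in Set.Ico (0:ℝ) ℓ, (ℓ - z) * G z ∂μ) = I from hIdef.symm] at h
    have hb' : b = lam * I / ℓ := by
      field_simp
      linarith
    have hx' := hb x hx
    rw [hiter x hx] at hx'
    rw [hx', hgreen x hx, hb']
    field_simp
  · intro hg
    refine ⟨lam * I / ℓ, fun x hx => ?_⟩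
    rw [hiter x hx, hg x hx, hgreen x hx]
    field_simp
end

section
/- Symmetrized energy identity: let dm be a finite nonnegative measure supported in [0,ℓ], and let g, ĝ ∈ L²(dm) satisfy ∫ g dm = ∫ ĝ dm = 0. Define f(x) = a - ∫_0^x dy ∫_{[0,y)} g(z) dm(z) and f̂(x) = â - ∫_0^x dy ∫_{[0,y)} ĝ(z) dm(z). Then ∫_0^ℓ f'(x) f̂'(x) dx = -(1/2) ∫∫ g(z)ĝ(u) |z-u| dm(z) dm(u). -/
open MeasureTheory

/-- symmetrized energy identity. For g, h ∈ L²(dm) of dm-mean zero (dm a finite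
measure supported in [0,ℓ]) and f, f̂ with derivatives f'(x) = -∫_{[0,x)} g dm,
f̂'(x) = -∫_{[0,x)} h dm, one has ∫₀^ℓ f' f̂' dx = -(1/2)∫∫ g(z)h(u)|z-u| dm(z)dm(u). -/
theorem stmt_13 (ℓ : ℝ) (hℓ : 0 < ℓ) (μ : Measure ℝ) [IsFiniteMeasure μ]
    (hsupp : μ (Set.Icc (0 : ℝ) ℓ)ᶜ = 0)
    (g h : ℝ → ℝ) (hg : MemLp g 2 μ) (hh : MemLp h 2 μ)
    (hgmean : ∫ z, g z ∂μ = 0) (hhmean : ∫ z, h z ∂μ = 0) :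
    (∫ x in (0 : ℝ)..ℓ,
        (-(∫ z in Set.Ico (0 : ℝ) x, g z ∂μ)) * (-(∫ z in Set.Ico (0 : ℝ) x, h z ∂μ)))
      = -(1 / 2) * ∫ z, (∫ u, g z * h u * |z - u| ∂μ) ∂μ := by
  have hg1 : Integrable g μ := hg.integrable one_le_two
  have hh1 : Integrable h μ := hh.integrable one_le_two
  have hghi : Integrable (fun p : ℝ × ℝ => g p.1 * h p.2) (μ.prod μ) := hg1.mul_prod hh1
  have hae : ∀ᵐ z ∂μ, z ∈ Set.Icc (0:ℝ) ℓ := by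
    rw [Filter.eventually_iff, mem_ae_iff]
    exact hsupp
  have haep : ∀ᵐ p ∂(μ.prod μ), p.1 ∈ Set.Icc (0:ℝ) ℓ ∧ p.2 ∈ Set.Icc (0:ℝ) ℓ := by
    rw [Filter.eventually_iff, mem_ae_iff]
    have hsub : {p : ℝ × ℝ | p.1 ∈ Set.Icc (0:ℝ) ℓ ∧ p.2 ∈ Set.Icc (0:ℝ) ℓ}ᶜ ⊆
        ((Set.Icc (0:ℝ) ℓ)ᶜ ×ˢ Set.univ) ∪ (Set.univ ×ˢ (Set.Icc (0:ℝ) ℓ)ᶜ) := by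
      intro p hp
      simp only [Set.mem_compl_iff, Set.mem_setOf_eq, not_and_or] at hp
      rcases hp with hp | hp
      · exact Or.inl ⟨hp, trivial⟩
      · exact Or.inr ⟨trivial, hp⟩
    refine le_antisymm (le_trans (measure_mono hsub) ?_) zero_le
    refine le_trans (measure_union_le _ _) ?_
    rw [Measure.prod_prod, Measure.prod_prod, hsupp]
    simp
  -- representation of the primitive integrals
  have hGlo : ∀ (f : ℝ → ℝ), ∀ x : ℝ, (∫ z in Set.Ico (0:ℝ) x, f z ∂μ)
      = ∫ z, Set.indicator (Set.Iio x) f z ∂μ := by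
    intro f x
    rw [← integral_indicator measurableSet_Ico]
    refine integral_congr_ae ?_
    filter_upwards [hae] with z hz
    simp only [Set.indicator_apply, Set.mem_Ico, Set.mem_Iio]
    by_cases hzx : z < x <;> simp [hzx, hz.1]
  have hGhi : ∀ (f : ℝ → ℝ), Integrable f μ → (∫ z, f z ∂μ) = 0 → ∀ x : ℝ,
      (∫ z, Set.indicator (Set.Iio x) f z ∂μ) = -∫ z, Set.indicator (Set.Ici x) f z ∂μ := by
    intro f hf1 hfmean x
    have hsum : ∀ z, Set.indicator (Set.Iio x) f z + Set.indicator (Set.Ici x) f z = f z := by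
      intro z
      simp only [Set.indicator_apply, Set.mem_Iio, Set.mem_Ici]
      by_cases hzx : z < x
      · simp [hzx, not_le.mpr hzx]
      · simp [hzx, not_lt.mp hzx]
    have h1 : Integrable (Set.indicator (Set.Iio x) f) μ := hf1.indicator measurableSet_Iio
    have h2 : Integrable (Set.indicator (Set.Ici x) f) μ := hf1.indicator measurableSet_Ici
    have := integral_add h1 h2
    simp only [funext hsum] at this
    rw [hfmean] at this
    linarith [this]
  -- Fubini computation, version A
  have keyA : (∫ x in Set.Ioc (0:ℝ) ℓ,
      (∫ z, Set.indicator (Set.Iio x) g z ∂μ) * (∫ z, Set.indicator (Set.Iio x) h z ∂μ))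
      = ∫ p, g p.1 * h p.2 * (ℓ - max p.1 p.2) ∂(μ.prod μ) := by
    set F : ℝ → ℝ × ℝ → ℝ :=
      fun x p => Set.indicator {p : ℝ × ℝ | max p.1 p.2 < x} (fun p => g p.1 * h p.2) p with hF
    have hFi : Integrable (Function.uncurry F)
        ((volume.restrict (Set.Ioc (0:ℝ) ℓ)).prod (μ.prod μ)) := by
      have hFm : AEStronglyMeasurable (Function.uncurry F)
          ((volume.restrict (Set.Ioc (0:ℝ) ℓ)).prod (μ.prod μ)) := by
        have hset : MeasurableSet {q : ℝ × ℝ × ℝ | max q.2.1 q.2.2 < q.1} :=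
          measurableSet_lt ((measurable_fst.comp measurable_snd).max
            (measurable_snd.comp measurable_snd)) measurable_fst
        have : Function.uncurry F = Set.indicator {q : ℝ × ℝ × ℝ | max q.2.1 q.2.2 < q.1}
            (fun q => g q.2.1 * h q.2.2) := by
          funext q
          simp only [Function.uncurry, hF, Set.indicator_apply, Set.mem_setOf_eq]
        rw [this]
        exact (hghi.1.comp_snd).indicator hset
      have hdom : Integrable (fun q : ℝ × ℝ × ℝ => (1:ℝ) * ‖g q.2.1 * h q.2.2‖)
          ((volume.restrict (Set.Ioc (0:ℝ) ℓ)).prod (μ.prod μ)) :=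
        (integrable_const (1:ℝ)).mul_prod hghi.norm
      refine hdom.mono' hFm (Filter.Eventually.of_forall fun q => ?_)
      simp only [one_mul, Function.uncurry, hF]
      exact (norm_indicator_le_norm_self _ _).trans (le_of_eq rfl)
    have hswap := integral_integral_swap hFi
    have step1 : ∀ x : ℝ,
        (∫ z, Set.indicator (Set.Iio x) g z ∂μ) * (∫ z, Set.indicator (Set.Iio x) h z ∂μ)
        = ∫ p, F x p ∂(μ.prod μ) := by
      intro x
      rw [← integral_prod_mul]
      refine integral_congr_ae (Filter.Eventually.of_forall fun p => ?_)
      simp only [Set.indicator_apply, Set.mem_Iio, Set.mem_setOf_eq, max_lt_iff, hF]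
      by_cases h1 : p.1 < x <;> by_cases h2 : p.2 < x <;> simp [h1, h2]
    have hinner : ∀ p : ℝ × ℝ, p.1 ∈ Set.Icc (0:ℝ) ℓ → p.2 ∈ Set.Icc (0:ℝ) ℓ →
        (∫ x in Set.Ioc (0:ℝ) ℓ, F x p) = g p.1 * h p.2 * (ℓ - max p.1 p.2) := by
      intro p h1 h2
      have heq : (fun x => F x p) = Set.indicator (Set.Ioi (max p.1 p.2))
          (fun _ => g p.1 * h p.2) := by
        funext x
        simp only [hF, Set.indicator_apply, Set.mem_setOf_eq, Set.mem_Ioi]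
      rw [heq, integral_indicator_const _ measurableSet_Ioi,
        measureReal_restrict_apply measurableSet_Ioi]
      have hm0 : (0:ℝ) ≤ max p.1 p.2 := le_max_of_le_left h1.1
      have hmℓ : max p.1 p.2 ≤ ℓ := max_le h1.2 h2.2
      have hseteq : Set.Ioi (max p.1 p.2) ∩ Set.Ioc (0:ℝ) ℓ = Set.Ioc (max p.1 p.2) ℓ := by
        ext x
        simp only [Set.mem_inter_iff, Set.mem_Ioi, Set.mem_Ioc]
        constructor
        · rintro ⟨hx1, _, hx3⟩; exact ⟨hx1, hx3⟩
        · rintro ⟨hx1, hx2⟩; exact ⟨hx1, lt_of_le_of_lt hm0 hx1, hx2⟩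
      rw [hseteq, Real.volume_real_Ioc, max_eq_left (by linarith)]
      rw [smul_eq_mul]; ring
    calc (∫ x in Set.Ioc (0:ℝ) ℓ,
        (∫ z, Set.indicator (Set.Iio x) g z ∂μ) * (∫ z, Set.indicator (Set.Iio x) h z ∂μ))
        = ∫ x in Set.Ioc (0:ℝ) ℓ, ∫ p, F x p ∂(μ.prod μ) := by
          exact integral_congr_ae (Filter.Eventually.of_forall fun x => step1 x)
      _ = ∫ p, (∫ x in Set.Ioc (0:ℝ) ℓ, F x p) ∂(μ.prod μ) := hswap
      _ = ∫ p, g p.1 * h p.2 * (ℓ - max p.1 p.2) ∂(μ.prod μ) := by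
          refine integral_congr_ae ?_
          filter_upwards [haep] with p hp
          exact hinner p hp.1 hp.2
  -- Fubini computation, version B
  have keyB : (∫ x in Set.Ioc (0:ℝ) ℓ,
      (∫ z, Set.indicator (Set.Ici x) g z ∂μ) * (∫ z, Set.indicator (Set.Ici x) h z ∂μ))
      = ∫ p, g p.1 * h p.2 * (min p.1 p.2) ∂(μ.prod μ) := by
    set F : ℝ → ℝ × ℝ → ℝ :=
      fun x p => Set.indicator {p : ℝ × ℝ | x ≤ min p.1 p.2} (fun p => g p.1 * h p.2) p with hF
    have hFi : Integrable (Function.uncurry F)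
        ((volume.restrict (Set.Ioc (0:ℝ) ℓ)).prod (μ.prod μ)) := by
      have hFm : AEStronglyMeasurable (Function.uncurry F)
          ((volume.restrict (Set.Ioc (0:ℝ) ℓ)).prod (μ.prod μ)) := by
        have hset : MeasurableSet {q : ℝ × ℝ × ℝ | q.1 ≤ min q.2.1 q.2.2} :=
          measurableSet_le measurable_fst ((measurable_fst.comp measurable_snd).min
            (measurable_snd.comp measurable_snd))
        have : Function.uncurry F = Set.indicator {q : ℝ × ℝ × ℝ | q.1 ≤ min q.2.1 q.2.2}
            (fun q => g q.2.1 * h q.2.2) := by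
          funext q
          simp only [Function.uncurry, hF, Set.indicator_apply, Set.mem_setOf_eq]
        rw [this]
        exact (hghi.1.comp_snd).indicator hset
      have hdom : Integrable (fun q : ℝ × ℝ × ℝ => (1:ℝ) * ‖g q.2.1 * h q.2.2‖)
          ((volume.restrict (Set.Ioc (0:ℝ) ℓ)).prod (μ.prod μ)) :=
        (integrable_const (1:ℝ)).mul_prod hghi.norm
      refine hdom.mono' hFm (Filter.Eventually.of_forall fun q => ?_)
      simp only [one_mul, Function.uncurry, hF]
      exact (norm_indicator_le_norm_self _ _).trans (le_of_eq rfl)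
    have hswap := integral_integral_swap hFi
    have step1 : ∀ x : ℝ,
        (∫ z, Set.indicator (Set.Ici x) g z ∂μ) * (∫ z, Set.indicator (Set.Ici x) h z ∂μ)
        = ∫ p, F x p ∂(μ.prod μ) := by
      intro x
      rw [← integral_prod_mul]
      refine integral_congr_ae (Filter.Eventually.of_forall fun p => ?_)
      simp only [Set.indicator_apply, Set.mem_Ici, Set.mem_setOf_eq, le_min_iff, hF]
      by_cases h1 : x ≤ p.1 <;> by_cases h2 : x ≤ p.2 <;> simp [h1, h2]
    have hinner : ∀ p : ℝ × ℝ, p.1 ∈ Set.Icc (0:ℝ) ℓ → p.2 ∈ Set.Icc (0:ℝ) ℓ →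
        (∫ x in Set.Ioc (0:ℝ) ℓ, F x p) = g p.1 * h p.2 * (min p.1 p.2) := by
      intro p h1 h2
      have heq : (fun x => F x p) = Set.indicator (Set.Iic (min p.1 p.2))
          (fun _ => g p.1 * h p.2) := by
        funext x
        simp only [hF, Set.indicator_apply, Set.mem_setOf_eq, Set.mem_Iic]
      rw [heq, integral_indicator_const _ measurableSet_Iic,
        measureReal_restrict_apply measurableSet_Iic]
      have hm0 : (0:ℝ) ≤ min p.1 p.2 := le_min h1.1 h2.1
      have hmℓ : min p.1 p.2 ≤ ℓ := le_trans (min_le_left _ _) h1.2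
      have hseteq : Set.Iic (min p.1 p.2) ∩ Set.Ioc (0:ℝ) ℓ = Set.Ioc (0:ℝ) (min p.1 p.2) := by
        ext x
        simp only [Set.mem_inter_iff, Set.mem_Iic, Set.mem_Ioc]
        constructor
        · rintro ⟨hx1, hx2, _⟩; exact ⟨hx2, hx1⟩
        · rintro ⟨hx1, hx2⟩; exact ⟨hx2, hx1, le_trans hx2 hmℓ⟩
      rw [hseteq, Real.volume_real_Ioc, max_eq_left (by linarith)]
      rw [smul_eq_mul]; ring
    calc (∫ x in Set.Ioc (0:ℝ) ℓ,
        (∫ z, Set.indicator (Set.Ici x) g z ∂μ) * (∫ z, Set.indicator (Set.Ici x) h z ∂μ))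
        = ∫ x in Set.Ioc (0:ℝ) ℓ, ∫ p, F x p ∂(μ.prod μ) := by
          exact integral_congr_ae (Filter.Eventually.of_forall fun x => step1 x)
      _ = ∫ p, (∫ x in Set.Ioc (0:ℝ) ℓ, F x p) ∂(μ.prod μ) := hswap
      _ = ∫ p, g p.1 * h p.2 * (min p.1 p.2) ∂(μ.prod μ) := by
          refine integral_congr_ae ?_
          filter_upwards [haep] with p hp
          exact hinner p hp.1 hp.2
  -- integrability of the combined integrands
  have habs : Integrable (fun p : ℝ × ℝ => g p.1 * h p.2 * |p.1 - p.2|) (μ.prod μ) := by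
    have hm : AEStronglyMeasurable (fun p : ℝ × ℝ => g p.1 * h p.2 * |p.1 - p.2|) (μ.prod μ) :=
      hghi.1.mul ((continuous_fst.sub continuous_snd).abs.aestronglyMeasurable)
    refine (hghi.norm.mul_const ℓ).mono' hm ?_
    filter_upwards [haep] with p hp
    rw [norm_mul]
    refine mul_le_mul_of_nonneg_left ?_ (norm_nonneg _)
    rw [Real.norm_eq_abs, abs_abs, abs_sub_le_iff]
    constructor <;> [linarith [hp.1.1, hp.1.2, hp.2.1, hp.2.2];
      linarith [hp.1.1, hp.1.2, hp.2.1, hp.2.2]]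
  have iA : Integrable (fun p : ℝ × ℝ => g p.1 * h p.2 * (ℓ - max p.1 p.2)) (μ.prod μ) := by
    have hm : AEStronglyMeasurable (fun p : ℝ × ℝ => g p.1 * h p.2 * (ℓ - max p.1 p.2))
        (μ.prod μ) :=
      hghi.1.mul ((continuous_const.sub (continuous_fst.max continuous_snd)).aestronglyMeasurable)
    refine (hghi.norm.mul_const ℓ).mono' hm ?_
    filter_upwards [haep] with p hp
    rw [norm_mul]
    refine mul_le_mul_of_nonneg_left ?_ (norm_nonneg _)
    rw [Real.norm_eq_abs, abs_le]
    have h1 : (0:ℝ) ≤ max p.1 p.2 := le_max_of_le_left hp.1.1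
    have h2 : max p.1 p.2 ≤ ℓ := max_le hp.1.2 hp.2.2
    constructor <;> linarith
  have iB : Integrable (fun p : ℝ × ℝ => g p.1 * h p.2 * (min p.1 p.2)) (μ.prod μ) := by
    have hm : AEStronglyMeasurable (fun p : ℝ × ℝ => g p.1 * h p.2 * (min p.1 p.2))
        (μ.prod μ) :=
      hghi.1.mul ((continuous_fst.min continuous_snd).aestronglyMeasurable)
    refine (hghi.norm.mul_const ℓ).mono' hm ?_
    filter_upwards [haep] with p hp
    rw [norm_mul]
    refine mul_le_mul_of_nonneg_left ?_ (norm_nonneg _)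
    rw [Real.norm_eq_abs, abs_le]
    have h1 : (0:ℝ) ≤ min p.1 p.2 := le_min hp.1.1 hp.2.1
    have h2 : min p.1 p.2 ≤ ℓ := le_trans (min_le_left _ _) hp.1.2
    constructor <;> linarith
  -- the two representations of the LHS
  have hLHS : (∫ x in (0 : ℝ)..ℓ,
      (-(∫ z in Set.Ico (0 : ℝ) x, g z ∂μ)) * (-(∫ z in Set.Ico (0 : ℝ) x, h z ∂μ)))
      = ∫ x in Set.Ioc (0:ℝ) ℓ,
        (∫ z in Set.Ico (0 : ℝ) x, g z ∂μ) * (∫ z in Set.Ico (0 : ℝ) x, h z ∂μ) := by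
    rw [intervalIntegral.integral_of_le hℓ.le]
    exact integral_congr_ae (Filter.Eventually.of_forall fun x => neg_mul_neg _ _)
  have hLA : (∫ x in (0 : ℝ)..ℓ,
      (-(∫ z in Set.Ico (0 : ℝ) x, g z ∂μ)) * (-(∫ z in Set.Ico (0 : ℝ) x, h z ∂μ)))
      = ∫ p, g p.1 * h p.2 * (ℓ - max p.1 p.2) ∂(μ.prod μ) := by
    rw [hLHS, ← keyA]
    exact integral_congr_ae (Filter.Eventually.of_forall fun x => by beta_reduce; rw [hGlo g x, hGlo h x])
  have hLB : (∫ x in (0 : ℝ)..ℓ,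
      (-(∫ z in Set.Ico (0 : ℝ) x, g z ∂μ)) * (-(∫ z in Set.Ico (0 : ℝ) x, h z ∂μ)))
      = ∫ p, g p.1 * h p.2 * (min p.1 p.2) ∂(μ.prod μ) := by
    rw [hLHS, ← keyB]
    refine integral_congr_ae (Filter.Eventually.of_forall fun x => ?_)
    beta_reduce
    rw [hGlo g x, hGlo h x, hGhi g hg1 hgmean x, hGhi h hh1 hhmean x, neg_mul_neg]
  -- combine
  have hzero : (∫ p, g p.1 * h p.2 * ℓ ∂(μ.prod μ)) = 0 := by
    rw [integral_mul_const, integral_prod_mul, hgmean, zero_mul, zero_mul]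
  have hsum : (∫ p, g p.1 * h p.2 * (ℓ - max p.1 p.2) ∂(μ.prod μ))
      + (∫ p, g p.1 * h p.2 * (min p.1 p.2) ∂(μ.prod μ))
      = -∫ p, g p.1 * h p.2 * |p.1 - p.2| ∂(μ.prod μ) := by
    rw [← integral_add iA iB]
    have : (fun p : ℝ × ℝ => g p.1 * h p.2 * (ℓ - max p.1 p.2) + g p.1 * h p.2 * (min p.1 p.2))
        = fun p : ℝ × ℝ => g p.1 * h p.2 * ℓ - g p.1 * h p.2 * |p.1 - p.2| := by
      funext p
      have habs' : |p.1 - p.2| = max p.1 p.2 - min p.1 p.2 := (max_sub_min_eq_abs' _ _).symm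
      rw [habs']; ring
    rw [this, integral_sub (hghi.mul_const ℓ) habs, hzero, zero_sub]
  have hRHS : (∫ z, (∫ u, g z * h u * |z - u| ∂μ) ∂μ)
      = ∫ p, g p.1 * h p.2 * |p.1 - p.2| ∂(μ.prod μ) := by
    exact integral_integral habs
  rw [hRHS]
  linarith [hLA, hLB, hsum]
end
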